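/- Let X ⊆ ℝⁿ be a finite configuration with diameter b and box-width a > 0, and let P be a configuration of t points with diameter at most a(t−2). Color ℝⁿ with ⌈b/a⌉ + 1 colors by coloring the block [(i−1)a, ia) × ℝⁿ⁻¹ with color i mod (⌈b/a⌉+1). Then under this coloring there is neither a monochromatic isometric copy of X nor a rainbow isometric copy of P. -/

import Mathlib

lemma coord_le_dist {n : ℕ} (x y : EuclideanSpace ℝ (Fin n)) (i : Fin n) :
    |x i - y i| ≤ dist x y := by
  rw [EuclideanSpace.dist_eq]
  rw [← Real.sqrt_sq_eq_abs]
  apply Real.sqrt_le_sqrt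
  have := Finset.single_le_sum (f := fun j => dist (x j) (y j) ^ 2)
    (fun j _ => sq_nonneg _) (Finset.mem_univ i)
  simpa [Real.dist_eq] using this

lemma floor_sub_le {a b p q : ℝ} (ha : 0 < a) (hb : 0 ≤ b) (h : |p - q| ≤ b) :
    ⌊p / a⌋ - ⌊q / a⌋ ≤ ⌈b / a⌉ := by
  have hp : p ≤ q + b := by
    have := abs_le.1 h
    linarith [this.2]
  have h1 : p / a ≤ q / a + b / a := by
    rw [← add_div]; gcongr
  have h2 : ⌊p / a⌋ ≤ ⌊q / a + (⌈b / a⌉ : ℝ)⌋ := by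
    apply Int.floor_le_floor
    exact h1.trans (by linarith [Int.le_ceil (b / a)])
  rw [Int.floor_add_intCast] at h2
  omega

theorem stmt8 (n : ℕ) (hn : 0 < n)
    (X : Set (EuclideanSpace ℝ (Fin n))) (hXfin : X.Finite)
    (a b : ℝ) (ha : 0 < a) (hdiam : Metric.diam X = b)
    (hBW : (∃ f : EuclideanSpace ℝ (Fin n) ≃ᵢ EuclideanSpace ℝ (Fin n),
        ∀ x ∈ X, f x ⟨0, hn⟩ ∈ Set.Icc (0 : ℝ) a) ∧
      ∀ a' : ℝ, (∃ f : EuclideanSpace ℝ (Fin n) ≃ᵢ EuclideanSpace ℝ (Fin n),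
        ∀ x ∈ X, f x ⟨0, hn⟩ ∈ Set.Icc (0 : ℝ) a') → a ≤ a')
    (t : ℕ) (P : Finset (EuclideanSpace ℝ (Fin n))) (hPcard : P.card = t)
    (hPdiam : Metric.diam (P : Set (EuclideanSpace ℝ (Fin n))) ≤ a * ((t : ℝ) - 2))
    (χ : EuclideanSpace ℝ (Fin n) → ℤ)
    (hχ : ∀ x : EuclideanSpace ℝ (Fin n), χ x = ⌊x ⟨0, hn⟩ / a⌋ % (⌈b / a⌉ + 1)) :
    (¬ ∃ f : EuclideanSpace ℝ (Fin n) ≃ᵢ EuclideanSpace ℝ (Fin n),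
        ∀ x ∈ X, ∀ y ∈ X, χ (f x) = χ (f y)) ∧
    (¬ ∃ g : EuclideanSpace ℝ (Fin n) ≃ᵢ EuclideanSpace ℝ (Fin n),
        ∀ p ∈ P, ∀ q ∈ P, p ≠ q → χ (g p) ≠ χ (g q)) := by
  have hb : 0 ≤ b := hdiam ▸ Metric.diam_nonneg
  have hM : (0 : ℤ) < ⌈b / a⌉ + 1 := by
    have : (0 : ℤ) ≤ ⌈b / a⌉ := Int.ceil_nonneg (by positivity)
    omega
  constructor
  · -- no monochromatic copy of X
    rintro ⟨f, hf⟩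
    -- X nonempty
    rcases Set.eq_empty_or_nonempty X with hX | hX
    · have : a ≤ 0 := hBW.2 0 ⟨IsometryEquiv.refl _, by simp [hX]⟩
      linarith
    -- all floors equal
    have hfl : ∀ x ∈ X, ∀ y ∈ X, ⌊f x ⟨0, hn⟩ / a⌋ = ⌊f y ⟨0, hn⟩ / a⌋ := by
      intro x hx y hy
      have hcol := hf x hx y hy
      rw [hχ, hχ] at hcol
      have hd : dist (f x) (f y) ≤ b := by
        rw [f.dist_eq]
        exact hdiam ▸ Metric.dist_le_diam_of_mem (hXfin.isBounded) hx hy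
      have h1 : |f x ⟨0, hn⟩ - f y ⟨0, hn⟩| ≤ b :=
        (coord_le_dist _ _ _).trans hd
      have h2 := floor_sub_le ha hb h1
      have h3 := floor_sub_le ha hb (by rwa [abs_sub_comm] at h1)
      have hdvd : (⌈b / a⌉ + 1) ∣ (⌊f x ⟨0, hn⟩ / a⌋ - ⌊f y ⟨0, hn⟩ / a⌋) :=
        Int.ModEq.dvd (Int.ModEq.symm hcol)
      have := Int.eq_zero_of_abs_lt_dvd hdvd (by rw [abs_lt]; omega)
      omega
    -- pick some x0 ∈ X; all first coords in [k*a, (k+1)*a)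
    obtain ⟨x0, hx0⟩ := hX
    set k : ℤ := ⌊f x0 ⟨0, hn⟩ / a⌋ with hk
    have hmem : ∀ x ∈ X, f x ⟨0, hn⟩ ∈ Set.Ico ((k : ℝ) * a) ((k + 1) * a) := by
      intro x hx
      have hkx : ⌊f x ⟨0, hn⟩ / a⌋ = k := hfl x hx x0 hx0
      constructor
      · have := Int.floor_le (f x ⟨0, hn⟩ / a)
        rw [hkx] at this
        calc (k : ℝ) * a ≤ (f x ⟨0, hn⟩ / a) * a := by nlinarith
        _ = f x ⟨0, hn⟩ := by field_simp
      · have := Int.lt_floor_add_one (f x ⟨0, hn⟩ / a)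
        rw [hkx] at this
        push_cast
        calc f x ⟨0, hn⟩ = (f x ⟨0, hn⟩ / a) * a := by field_simp
        _ < ((k : ℝ) + 1) * a := by nlinarith
    -- take the max of first coords
    have hfinS : ((fun x => f x ⟨0, hn⟩) '' X).Finite := hXfin.image _
    have hneS : ((fun x => f x ⟨0, hn⟩) '' X).Nonempty := ⟨_, ⟨x0, hx0, rfl⟩⟩
    obtain ⟨M, hMmem, hMmax⟩ := hfinS.exists_maximalFor id _ hneS
    obtain ⟨xM, hxM, hxMeq⟩ := hMmem
    have hMlt : M < (k + 1 : ℝ) * a := by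
      have := (hmem xM hxM).2
      have hxMeq' : f xM ⟨0, hn⟩ = M := hxMeq
      rw [hxMeq'] at this
      push_cast at this ⊢
      linarith
    have hMle : ∀ x ∈ X, f x ⟨0, hn⟩ ≤ M := by
      intro x hx
      rcases le_or_gt (f x ⟨0, hn⟩) M with h | h
      · exact h
      · have := hMmax ⟨x, hx, rfl⟩ h.le
        simp only [id] at this
        linarith
    -- build translated isometry
    set v : EuclideanSpace ℝ (Fin n) := EuclideanSpace.single ⟨0, hn⟩ ((k : ℝ) * a) with hv
    have key : a ≤ M - (k : ℝ) * a := by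
      apply hBW.2
      refine ⟨f.trans (IsometryEquiv.addRight (-v)), ?_⟩
      intro x hx
      have h1 := (hmem x hx).1
      have h2 := hMle x hx
      simp only [IsometryEquiv.trans_apply, IsometryEquiv.addRight_apply]
      have hvv : (f x + -v) ⟨0, hn⟩ = f x ⟨0, hn⟩ - (k : ℝ) * a := by
        simp [hv, PiLp.add_apply, PiLp.neg_apply, EuclideanSpace.single_apply]
        ring
      rw [hvv]
      exact ⟨by linarith, by linarith⟩
    linarith [hMlt]
  · -- no rainbow copy of P
    rintro ⟨g, hg⟩
    -- t ≥ 2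
    have hdiamP : 0 ≤ Metric.diam (P : Set (EuclideanSpace ℝ (Fin n))) := Metric.diam_nonneg
    have ht2 : 2 ≤ t := by
      by_contra hlt
      push_neg at hlt
      interval_cases t
      · have : a * ((0 : ℝ) - 2) < 0 := by nlinarith
        linarith [hPdiam.trans_lt (by push_cast at this ⊢; linarith)]
      · have : a * ((1 : ℝ) - 2) < 0 := by nlinarith
        push_cast at hPdiam
        linarith
    have hPne : P.Nonempty := Finset.card_pos.1 (by omega)
    set φ : EuclideanSpace ℝ (Fin n) → ℤ := fun p => ⌊g p ⟨0, hn⟩ / a⌋ with hφ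
    have hbd : ∀ p ∈ P, ∀ q ∈ P, φ p - φ q ≤ (t : ℤ) - 2 := by
      intro p hp q hq
      have hd : dist (g p) (g q) ≤ a * ((t : ℝ) - 2) := by
        rw [g.dist_eq]
        exact (Metric.dist_le_diam_of_mem P.finite_toSet.isBounded hp hq).trans hPdiam
      have h1 : |g p ⟨0, hn⟩ - g q ⟨0, hn⟩| ≤ a * ((t : ℝ) - 2) :=
        (coord_le_dist _ _ _).trans hd
      have h2 := floor_sub_le ha (by nlinarith [ht2]) h1
      have h3 : ⌈a * ((t : ℝ) - 2) / a⌉ = (t : ℤ) - 2 := by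
        rw [mul_comm, mul_div_assoc, div_self (ne_of_gt ha), mul_one]
        exact_mod_cast Int.ceil_intCast ((t : ℤ) - 2)
      simp only [hφ]
      omega
    -- min of floors
    obtain ⟨p0, hp0, hp0min⟩ := P.exists_min_image φ hPne
    have hmaps : ∀ p ∈ P, φ p ∈ Finset.Icc (φ p0) (φ p0 + ((t : ℤ) - 2)) := by
      intro p hp
      rw [Finset.mem_Icc]
      exact ⟨hp0min p hp, by linarith [hbd p hp p0 hp0]⟩
    have hcard : (Finset.Icc (φ p0) (φ p0 + ((t : ℤ) - 2))).card < P.card := by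
      rw [Int.card_Icc]
      simp only [hPcard]
      omega
    obtain ⟨p, hp, q, hq, hne, heq⟩ :=
      Finset.exists_ne_map_eq_of_card_lt_of_maps_to hcard hmaps
    have := hg p hp q hq hne
    apply this
    rw [hχ, hχ, show ⌊g p ⟨0, hn⟩ / a⌋ = ⌊g q ⟨0, hn⟩ / a⌋ from heq]
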